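/- Let E be an arbitrary graph and I any ideal of the Leavitt path algebra L_K(E). Then I^⊥ = {a ∈ L_K(E) : ax = xa = 0 for all x ∈ I} is a ℤ-graded ideal. -/

import Mathlib

/-- A directed graph `E = (E⁰, E¹, r, s)`. -/
structure DGraph where
  V : Type
  E : Type
  src : E → V
  rng : E → V

namespace DGraph

/-- A graph is row-finite if every vertex emits finitely many edges. -/
def RowFinite (G : DGraph) : Prop := ∀ v : G.V, {e : G.E | G.src e = v}.Finite

/-- Generators of the Leavitt path algebra: vertices, edges, and ghost edges. -/
inductive LGen (G : DGraph) : Type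
  | v : G.V → LGen G
  | e : G.E → LGen G
  | g : G.E → LGen G

/-- The defining relations of the Leavitt path algebra. -/
inductive LRel (K : Type) [Field K] (G : DGraph) :
    FreeAlgebra K (LGen G) → FreeAlgebra K (LGen G) → Prop
  | vert_idem (u : G.V) :
      LRel K G (FreeAlgebra.ι K (LGen.v u) * FreeAlgebra.ι K (LGen.v u))
        (FreeAlgebra.ι K (LGen.v u))
  | vert_orth {u w : G.V} (h : u ≠ w) :
      LRel K G (FreeAlgebra.ι K (LGen.v u) * FreeAlgebra.ι K (LGen.v w)) 0
  | src_edge (e : G.E) :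
      LRel K G (FreeAlgebra.ι K (LGen.v (G.src e)) * FreeAlgebra.ι K (LGen.e e))
        (FreeAlgebra.ι K (LGen.e e))
  | edge_rng (e : G.E) :
      LRel K G (FreeAlgebra.ι K (LGen.e e) * FreeAlgebra.ι K (LGen.v (G.rng e)))
        (FreeAlgebra.ι K (LGen.e e))
  | rng_ghost (e : G.E) :
      LRel K G (FreeAlgebra.ι K (LGen.v (G.rng e)) * FreeAlgebra.ι K (LGen.g e))
        (FreeAlgebra.ι K (LGen.g e))
  | ghost_src (e : G.E) :
      LRel K G (FreeAlgebra.ι K (LGen.g e) * FreeAlgebra.ι K (LGen.v (G.src e)))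
        (FreeAlgebra.ι K (LGen.g e))
  | ck1 (e : G.E) :
      LRel K G (FreeAlgebra.ι K (LGen.g e) * FreeAlgebra.ι K (LGen.e e))
        (FreeAlgebra.ι K (LGen.v (G.rng e)))
  | ck1_orth {e f : G.E} (h : e ≠ f) :
      LRel K G (FreeAlgebra.ι K (LGen.g e) * FreeAlgebra.ι K (LGen.e f)) 0
  | ck2 (u : G.V) (S : Finset G.E) (hS : S.Nonempty) (hsrc : ∀ e : G.E, G.src e = u ↔ e ∈ S) :
      LRel K G (FreeAlgebra.ι K (LGen.v u))
        (∑ e ∈ S, FreeAlgebra.ι K (LGen.e e) * FreeAlgebra.ι K (LGen.g e))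

/-- The Leavitt path algebra of the graph `G` with coefficients in `K`, defined as the
universal `K`-algebra on the generators subject to the Leavitt path algebra relations. -/
def LPA (K : Type) [Field K] (G : DGraph) : Type := RingQuot (LRel K G)

instance (K : Type) [Field K] (G : DGraph) : Ring (LPA K G) :=
  inferInstanceAs (Ring (RingQuot (LRel K G)))

instance (K : Type) [Field K] (G : DGraph) : Algebra K (LPA K G) :=
  inferInstanceAs (Algebra K (RingQuot (LRel K G)))

variable (K : Type) [Field K] (G : DGraph)

/-- The image of a vertex in the Leavitt path algebra. -/
def vert (u : G.V) : LPA K G := RingQuot.mkAlgHom K (LRel K G) (FreeAlgebra.ι K (LGen.v u))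

/-- The image of an edge in the Leavitt path algebra. -/
def edge (e : G.E) : LPA K G := RingQuot.mkAlgHom K (LRel K G) (FreeAlgebra.ι K (LGen.e e))

/-- The image of a ghost edge in the Leavitt path algebra. -/
def ghost (e : G.E) : LPA K G := RingQuot.mkAlgHom K (LRel K G) (FreeAlgebra.ι K (LGen.g e))

/-- Finite paths in `G` from a vertex to a vertex; a trivial path at each vertex,
and `cons e p` follows the edge `e` and then the path `p`. -/
inductive Path (G : DGraph) : G.V → G.V → Type
  | nil (u : G.V) : Path G u u
  | cons (e : G.E) {w : G.V} (p : Path G (G.rng e) w) : Path G (G.src e) w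

/-- The length of a path. -/
def Path.length {G : DGraph} : ∀ {u w : G.V}, Path G u w → ℕ
  | _, _, .nil _ => 0
  | _, _, .cons _ p => p.length + 1

/-- The element of the Leavitt path algebra determined by a path (product of its edges). -/
def pathElem : ∀ {u w : G.V}, Path G u w → LPA K G
  | _, _, .nil v => vert K G v
  | _, _, .cons e p => edge K G e * pathElem p

/-- The element of the Leavitt path algebra determined by the adjoint (ghost) of a path. -/
def pathElemStar : ∀ {u w : G.V}, Path G u w → LPA K G
  | _, _, .nil v => vert K G v
  | _, _, .cons e p => pathElemStar p * ghost K G e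

/-- The homogeneous component of degree `n` of the canonical ℤ-grading of the
Leavitt path algebra: the span of elements `αβ*` with `|α| - |β| = n`. -/
def grade (n : ℤ) : Submodule K (LPA K G) :=
  Submodule.span K {x : LPA K G | ∃ (u u' w : G.V) (α : Path G u w) (β : Path G u' w),
    (α.length : ℤ) - (β.length : ℤ) = n ∧ x = pathElem K G α * pathElemStar K G β}

/-- A two-sided ideal `J` of the Leavitt path algebra is ℤ-graded if whenever a finite sum
`y = Σₙ yₙ` of homogeneous elements `yₙ` of degree `n` lies in `J`, each `yₙ` lies in `J`. -/
def IsGradedIdeal (J : TwoSidedIdeal (LPA K G)) : Prop :=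
  ∀ f : ℤ →₀ LPA K G, (∀ n : ℤ, f n ∈ grade K G n) →
    (f.sum fun _ x => x) ∈ J → ∀ n : ℤ, f n ∈ J

/-- The vertex set `H(I) = {v ∈ E⁰ : v ∈ I}` of an ideal `I`. -/
def vertSet (I : TwoSidedIdeal (LPA K G)) : Set G.V := {v : G.V | vert K G v ∈ I}

/-- The "closure" `H̄(I) = {s(α) : α ∈ E*, r(α) ∈ H(I)}` of the vertex set of an ideal. -/
def vertSetBar (I : TwoSidedIdeal (LPA K G)) : Set G.V :=
  {u : G.V | ∃ (w : G.V) (_ : Path G u w), vert K G w ∈ I}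

/-- The two-sided ideal of the Leavitt path algebra generated by a set of vertices. -/
def genIdeal (S : Set G.V) : TwoSidedIdeal (LPA K G) :=
  TwoSidedIdeal.span {x : LPA K G | ∃ v ∈ S, x = vert K G v}

/-- The two-sided annihilator of a subset. -/
def perpSet {A : Type*} [Ring A] (X : Set A) : Set A :=
  {a : A | ∀ x ∈ X, a * x = 0 ∧ x * a = 0}

/-- A subset `H ⊆ E⁰` is hereditary if `s(α) ∈ H` implies `r(α) ∈ H` for finite paths `α`. -/
def Hereditary (H : Set G.V) : Prop := ∀ (u w : G.V), Path G u w → u ∈ H → w ∈ H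

/-- A subset `H ⊆ E⁰` is saturated if every regular vertex all of whose emitted edges end
in `H` belongs to `H`. -/
def Saturated (H : Set G.V) : Prop :=
  ∀ (v : G.V) (S : Finset G.E), S.Nonempty → (∀ e : G.E, G.src e = v ↔ e ∈ S) →
    (∀ e ∈ S, G.rng e ∈ H) → v ∈ H

/-- The tree `T(w)` of a vertex `w` is contained in a set `X` iff every path from `w`
ends in `X`. -/
def TreeSubset (w : G.V) (X : Set G.V) : Prop := ∀ u : G.V, Path G w u → u ∈ X

end DGraph


namespace DGraph
open scoped Classical

variable {K : Type} [Field K] {G : DGraph}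

@[simp] lemma pathElem_nil (u : G.V) : pathElem K G (Path.nil u) = vert K G u := rfl
@[simp] lemma pathElem_cons (e : G.E) {w : G.V} (p : Path G (G.rng e) w) :
    pathElem K G (Path.cons e p) = edge K G e * pathElem K G p := rfl
@[simp] lemma pathElemStar_nil (u : G.V) : pathElemStar K G (Path.nil u) = vert K G u := rfl
@[simp] lemma pathElemStar_cons (e : G.E) {w : G.V} (p : Path G (G.rng e) w) :
    pathElemStar K G (Path.cons e p) = pathElemStar K G p * ghost K G e := rfl

private lemma gen_mul_eq {x y z : FreeAlgebra K (LGen G)} (hxy : LRel K G (x * y) z) :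
    RingQuot.mkAlgHom K (LRel K G) x * RingQuot.mkAlgHom K (LRel K G) y
      = RingQuot.mkAlgHom K (LRel K G) z := by
  rw [← map_mul]; exact RingQuot.mkAlgHom_rel K hxy

private lemma gen_mul_eq0 {x y : FreeAlgebra K (LGen G)} (hxy : LRel K G (x * y) 0) :
    RingQuot.mkAlgHom K (LRel K G) x * RingQuot.mkAlgHom K (LRel K G) y = 0 := by
  rw [← map_mul, RingQuot.mkAlgHom_rel K hxy, map_zero]

lemma vert_mul_vert (u w : G.V) :
    vert K G u * vert K G w = if u = w then vert K G u else 0 := by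
  unfold vert
  by_cases h : u = w
  · subst h; exact (gen_mul_eq (LRel.vert_idem u)).trans (if_pos rfl).symm
  · exact (gen_mul_eq0 (LRel.vert_orth h)).trans (if_neg h).symm

lemma vert_mul_edge (u : G.V) (e : G.E) :
    vert K G u * edge K G e = if u = G.src e then edge K G e else 0 := by
  have h0 : vert K G (G.src e) * edge K G e = edge K G e := by
    unfold vert edge; exact gen_mul_eq (LRel.src_edge e)
  by_cases h : u = G.src e
  · subst h; rw [if_pos rfl]; exact h0
  · rw [if_neg h, ← h0, ← mul_assoc, vert_mul_vert, if_neg h, zero_mul]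

lemma edge_mul_vert (e : G.E) (u : G.V) :
    edge K G e * vert K G u = if u = G.rng e then edge K G e else 0 := by
  have h0 : edge K G e * vert K G (G.rng e) = edge K G e := by
    unfold vert edge; exact gen_mul_eq (LRel.edge_rng e)
  by_cases h : u = G.rng e
  · subst h; rw [if_pos rfl]; exact h0
  · rw [if_neg h, ← h0, mul_assoc, vert_mul_vert, if_neg (fun hh => h hh.symm), mul_zero]

lemma vert_mul_ghost (u : G.V) (e : G.E) :
    vert K G u * ghost K G e = if u = G.rng e then ghost K G e else 0 := by
  have h0 : vert K G (G.rng e) * ghost K G e = ghost K G e := by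
    unfold vert ghost; exact gen_mul_eq (LRel.rng_ghost e)
  by_cases h : u = G.rng e
  · subst h; rw [if_pos rfl]; exact h0
  · rw [if_neg h, ← h0, ← mul_assoc, vert_mul_vert, if_neg h, zero_mul]

lemma ghost_mul_vert (e : G.E) (u : G.V) :
    ghost K G e * vert K G u = if u = G.src e then ghost K G e else 0 := by
  have h0 : ghost K G e * vert K G (G.src e) = ghost K G e := by
    unfold vert ghost; exact gen_mul_eq (LRel.ghost_src e)
  by_cases h : u = G.src e
  · subst h; rw [if_pos rfl]; exact h0
  · rw [if_neg h, ← h0, mul_assoc, vert_mul_vert, if_neg (fun hh => h hh.symm), mul_zero]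

lemma ghost_mul_edge (e f : G.E) :
    ghost K G e * edge K G f = if e = f then vert K G (G.rng e) else 0 := by
  unfold vert edge ghost
  by_cases h : e = f
  · subst h; exact (gen_mul_eq (LRel.ck1 e)).trans (if_pos rfl).symm
  · exact (gen_mul_eq0 (LRel.ck1_orth h)).trans (if_neg h).symm

lemma ck2_sum (u : G.V) (S : Finset G.E) (hS : S.Nonempty)
    (hsrc : ∀ e : G.E, G.src e = u ↔ e ∈ S) :
    vert K G u = ∑ e ∈ S, edge K G e * ghost K G e := by
  unfold vert edge ghost
  rw [RingQuot.mkAlgHom_rel K (LRel.ck2 u S hS hsrc), map_sum]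
  simp only [map_mul]
  rfl

lemma vert_mul_pathElem {u w : G.V} (α : Path G u w) (x : G.V) :
    vert K G x * pathElem K G α = if x = u then pathElem K G α else 0 := by
  induction α with
  | nil v =>
    rw [pathElem_nil, vert_mul_vert]
    split_ifs with h
    · rw [h]
    · rfl
  | cons e p ih =>
    rw [pathElem_cons, ← mul_assoc, vert_mul_edge]
    split_ifs with h <;> simp

lemma pathElem_mul_vert {u w : G.V} (α : Path G u w) (x : G.V) :
    pathElem K G α * vert K G x = if x = w then pathElem K G α else 0 := by
  induction α with
  | nil v =>
    rw [pathElem_nil, vert_mul_vert]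
    split_ifs with h h' h'
    · rfl
    · exact absurd h.symm h'
    · exact absurd h'.symm h
    · rfl
  | cons e p ih =>
    rw [pathElem_cons, mul_assoc, ih]
    split_ifs with h <;> simp

lemma vert_mul_pathElemStar {u w : G.V} (β : Path G u w) (x : G.V) :
    vert K G x * pathElemStar K G β = if x = w then pathElemStar K G β else 0 := by
  induction β with
  | nil v =>
    rw [pathElemStar_nil, vert_mul_vert]
    split_ifs with h
    · rw [h]
    · rfl
  | cons e p ih =>
    rw [pathElemStar_cons, ← mul_assoc, ih]
    split_ifs with h <;> simp

lemma pathElemStar_mul_vert {u w : G.V} (β : Path G u w) (x : G.V) :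
    pathElemStar K G β * vert K G x = if x = u then pathElemStar K G β else 0 := by
  induction β with
  | nil v =>
    rw [pathElemStar_nil, vert_mul_vert]
    split_ifs with h h' h'
    · rfl
    · exact absurd h.symm h'
    · exact absurd h'.symm h
    · rfl
  | cons e p ih =>
    rw [pathElemStar_cons, mul_assoc, ghost_mul_vert]
    split_ifs with h <;> simp


-- ## Chunk 2: append, grade membership, closure

@[simp] lemma length_nil (u : G.V) : (Path.nil (G := G) u).length = 0 := rfl
@[simp] lemma length_cons (e : G.E) {w : G.V} (p : Path G (G.rng e) w) :
    (Path.cons e p).length = p.length + 1 := rfl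

/-- Concatenation of paths. -/
def papp : ∀ {u w w' : G.V}, Path G u w → Path G w w' → Path G u w'
  | _, _, _, Path.nil _, q => q
  | _, _, _, Path.cons e p, q => Path.cons e (papp p q)

@[simp] lemma papp_length : ∀ {u w w' : G.V} (p : Path G u w) (q : Path G w w'),
    (papp p q).length = p.length + q.length
  | _, _, _, Path.nil _, q => by simp [papp]
  | _, _, _, Path.cons e p, q => by simp [papp, papp_length p q]; omega

lemma pathElem_papp : ∀ {u w w' : G.V} (p : Path G u w) (q : Path G w w'),
    pathElem K G (papp p q) = pathElem K G p * pathElem K G q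
  | _, _, _, Path.nil u, q => by
      rw [papp, pathElem_nil, vert_mul_pathElem, if_pos rfl]
  | _, _, _, Path.cons e p, q => by
      rw [papp, pathElem_cons, pathElem_cons, pathElem_papp p q, mul_assoc]

lemma pathElemStar_papp : ∀ {u w w' : G.V} (p : Path G u w) (q : Path G w w'),
    pathElemStar K G (papp p q) = pathElemStar K G q * pathElemStar K G p
  | _, _, _, Path.nil u, q => by
      rw [papp, pathElemStar_nil, pathElemStar_mul_vert, if_pos rfl]
  | _, _, _, Path.cons e p, q => by
      rw [papp, pathElemStar_cons, pathElemStar_cons, pathElemStar_papp p q, mul_assoc]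

lemma grade_def (n : ℤ) : grade K G n =
    Submodule.span K {x : LPA K G | ∃ (u u' w : G.V) (α : Path G u w) (β : Path G u' w),
      (α.length : ℤ) - (β.length : ℤ) = n ∧ x = pathElem K G α * pathElemStar K G β} := rfl

lemma monomial_mem_grade {u u' w : G.V} (α : Path G u w) (β : Path G u' w) {n : ℤ}
    (h : (α.length : ℤ) - β.length = n) :
    pathElem K G α * pathElemStar K G β ∈ grade K G n :=
  Submodule.subset_span ⟨u, u', w, α, β, h, rfl⟩

lemma pathElem_mem_grade {u w : G.V} (α : Path G u w) :
    pathElem K G α ∈ grade K G (α.length : ℤ) := by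
  have h := monomial_mem_grade (K := K) α (Path.nil w) (n := (α.length : ℤ)) (by simp)
  rwa [pathElemStar_nil, pathElem_mul_vert, if_pos rfl] at h

lemma pathElemStar_mem_grade {u w : G.V} (β : Path G u w) :
    pathElemStar K G β ∈ grade K G (-(β.length : ℤ)) := by
  have h := monomial_mem_grade (K := K) (Path.nil w) β (n := -(β.length : ℤ)) (by simp)
  rwa [pathElem_nil, vert_mul_pathElemStar, if_pos rfl] at h

lemma vert_mem_grade (u : G.V) : vert K G u ∈ grade K G 0 :=
  pathElem_mem_grade (Path.nil u)

lemma star_mul_pathElem_mem {u' w u₂ w₂ : G.V} (β : Path G u' w) (γ : Path G u₂ w₂) :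
    pathElemStar K G β * pathElem K G γ ∈ grade K G ((γ.length : ℤ) - β.length) := by
  induction β generalizing u₂ w₂ γ with
  | nil v =>
    rw [pathElemStar_nil, vert_mul_pathElem]
    split_ifs with h
    · simpa using pathElem_mem_grade γ
    · exact Submodule.zero_mem _
  | cons f β₁ ih =>
    rw [pathElemStar_cons]
    cases γ with
    | nil v =>
      rw [pathElem_nil, mul_assoc, ghost_mul_vert]
      split_ifs with h
      · have h2 := pathElemStar_mem_grade (K := K) (Path.cons f β₁)
        rw [pathElemStar_cons] at h2
        simpa using h2
      · rw [mul_zero]; exact Submodule.zero_mem _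
    | cons e γ₁ =>
      rw [pathElem_cons, mul_assoc, ← mul_assoc (ghost K G f), ghost_mul_edge]
      split_ifs with h
      · subst h
        rw [vert_mul_pathElem, if_pos rfl]
        have h2 := ih γ₁
        have : ((γ₁.length : ℤ) - β₁.length)
            = ((Path.cons f γ₁).length : ℤ) - (Path.cons f β₁).length := by
          simp
        rw [this] at h2
        simpa using h2
      · simp only [zero_mul, mul_zero]; exact Submodule.zero_mem _

lemma pathElem_mul_pathElem_ne {u w a b : G.V} (α : Path G u w) (τ : Path G a b)
    (h : a ≠ w) : pathElem K G α * pathElem K G τ = 0 := by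
  have h1 : pathElem K G τ = vert K G a * pathElem K G τ := by
    rw [vert_mul_pathElem, if_pos rfl]
  
  rw [h1, ← mul_assoc, pathElem_mul_vert, if_neg h, zero_mul]

lemma star_mul_star_ne {c b u₃ w₃ : G.V} (ρ : Path G c b) (δ : Path G u₃ w₃)
    (h : c ≠ w₃) : pathElemStar K G ρ * pathElemStar K G δ = 0 := by
  have h1 : pathElemStar K G δ = vert K G w₃ * pathElemStar K G δ := by
    rw [vert_mul_pathElemStar, if_pos rfl]
  rw [h1, ← mul_assoc, pathElemStar_mul_vert, if_neg (fun hh => h hh.symm), zero_mul]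

lemma sandwich_mem {u w u₃ w₃ : G.V} (α : Path G u w) (δ : Path G u₃ w₃) {k : ℤ}
    {z : LPA K G} (hz : z ∈ grade K G k) :
    pathElem K G α * z * pathElemStar K G δ ∈ grade K G ((α.length : ℤ) + k - δ.length) := by
  rw [grade_def] at hz
  refine Submodule.span_induction ?_ ?_ ?_ ?_ hz
  · rintro x ⟨a, c, b, τ, ρ, hdeg, rfl⟩
    by_cases h1 : a = w
    · subst h1
      by_cases h2 : c = w₃
      · subst h2
        have e1 : pathElem K G α * (pathElem K G τ * pathElemStar K G ρ) * pathElemStar K G δ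
            = pathElem K G (papp α τ) * pathElemStar K G (papp δ ρ) := by
          rw [pathElem_papp, pathElemStar_papp]
          simp only [mul_assoc]
        rw [e1]
        refine monomial_mem_grade _ _ ?_
        simp only [papp_length]
        push_cast
        omega
      · have e2 : pathElem K G α * (pathElem K G τ * pathElemStar K G ρ) * pathElemStar K G δ
            = pathElem K G α * (pathElem K G τ * (pathElemStar K G ρ * pathElemStar K G δ)) := by
          simp only [mul_assoc]
        rw [e2, star_mul_star_ne ρ δ h2, mul_zero, mul_zero]
        exact Submodule.zero_mem _
    · have e2 : pathElem K G α * (pathElem K G τ * pathElemStar K G ρ) * pathElemStar K G δ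
          = pathElem K G α * pathElem K G τ * (pathElemStar K G ρ * pathElemStar K G δ) := by
        simp only [mul_assoc]
      rw [e2, pathElem_mul_pathElem_ne α τ h1, zero_mul]
      exact Submodule.zero_mem _
  · simp only [mul_zero, zero_mul]
    exact Submodule.zero_mem _
  · intro x y _ _ hx hy
    rw [mul_add, add_mul]
    exact Submodule.add_mem _ hx hy
  · intro t x _ hx
    rw [mul_smul_comm, smul_mul_assoc]
    exact Submodule.smul_mem _ _ hx

lemma grade_mul_grade {m n : ℤ} {x y : LPA K G} (hx : x ∈ grade K G m)
    (hy : y ∈ grade K G n) : x * y ∈ grade K G (m + n) := by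
  rw [grade_def] at hx
  refine Submodule.span_induction ?_ ?_ ?_ ?_ hx
  · rintro x' ⟨u, u', w, α, β, hdeg, rfl⟩
    rw [grade_def] at hy
    refine Submodule.span_induction ?_ ?_ ?_ ?_ hy
    · rintro y' ⟨a, c, b, γ, δ, hdeg', rfl⟩
      have e1 : pathElem K G α * pathElemStar K G β * (pathElem K G γ * pathElemStar K G δ)
          = pathElem K G α * (pathElemStar K G β * pathElem K G γ) * pathElemStar K G δ := by
        simp only [mul_assoc]
      rw [e1]
      have h2 := sandwich_mem (K := K) α δ (star_mul_pathElem_mem β γ)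
      have : (α.length : ℤ) + ((γ.length : ℤ) - β.length) - δ.length = m + n := by omega
      rwa [this] at h2
    · rw [mul_zero]; exact Submodule.zero_mem _
    · intro a b _ _ ha hb
      rw [mul_add]; exact Submodule.add_mem _ ha hb
    · intro t a _ ha
      rw [mul_smul_comm]; exact Submodule.smul_mem _ _ ha
  · rw [zero_mul]; exact Submodule.zero_mem _
  · intro a b _ _ ha hb
    rw [add_mul]; exact Submodule.add_mem _ ha hb
  · intro t a _ ha
    rw [smul_mul_assoc]; exact Submodule.smul_mem _ _ ha


-- ## Chunk 3: the grading homomorphism Θ, counit ε, graded components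

lemma AddMonoidAlgebra.single_finset_sum {ι : Type*} (s : Finset ι) (f : ι → LPA K G) (a : ℤ) :
    (AddMonoidAlgebra.single a (∑ i ∈ s, f i) : AddMonoidAlgebra (LPA K G) ℤ)
      = ∑ i ∈ s, AddMonoidAlgebra.single a (f i) :=
  map_sum (AddMonoidAlgebra.singleAddHom a) f s

/-- Generator images for the grading homomorphism. -/
noncomputable def thetaGen (K : Type) [Field K] (G : DGraph) :
    LGen G → AddMonoidAlgebra (LPA K G) ℤ
  | LGen.v u => AddMonoidAlgebra.single 0 (vert K G u)
  | LGen.e e => AddMonoidAlgebra.single 1 (edge K G e)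
  | LGen.g e => AddMonoidAlgebra.single (-1) (ghost K G e)

lemma thetaRel (K : Type) [Field K] (G : DGraph) :
    ∀ ⦃x y : FreeAlgebra K (LGen G)⦄, LRel K G x y →
      FreeAlgebra.lift K (thetaGen K G) x = FreeAlgebra.lift K (thetaGen K G) y := by
  intro x y h
  induction h with
  | vert_idem u =>
    simp only [map_mul, FreeAlgebra.lift_ι_apply]
    show AddMonoidAlgebra.single 0 (vert K G u) * AddMonoidAlgebra.single 0 (vert K G u)
      = AddMonoidAlgebra.single 0 (vert K G u)
    rw [AddMonoidAlgebra.single_mul_single, vert_mul_vert, if_pos rfl, add_zero]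
  | @vert_orth u w h =>
    simp only [map_mul, map_zero, FreeAlgebra.lift_ι_apply]
    show AddMonoidAlgebra.single 0 (vert K G u) * AddMonoidAlgebra.single 0 (vert K G w) = 0
    rw [AddMonoidAlgebra.single_mul_single, vert_mul_vert, if_neg h]
    exact AddMonoidAlgebra.single_zero _
  | src_edge e =>
    simp only [map_mul, FreeAlgebra.lift_ι_apply]
    show AddMonoidAlgebra.single 0 (vert K G (G.src e)) * AddMonoidAlgebra.single 1 (edge K G e)
      = AddMonoidAlgebra.single 1 (edge K G e)
    rw [AddMonoidAlgebra.single_mul_single, vert_mul_edge, if_pos rfl, zero_add]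
  | edge_rng e =>
    simp only [map_mul, FreeAlgebra.lift_ι_apply]
    show AddMonoidAlgebra.single 1 (edge K G e) * AddMonoidAlgebra.single 0 (vert K G (G.rng e))
      = AddMonoidAlgebra.single 1 (edge K G e)
    rw [AddMonoidAlgebra.single_mul_single, edge_mul_vert, if_pos rfl, add_zero]
  | rng_ghost e =>
    simp only [map_mul, FreeAlgebra.lift_ι_apply]
    show AddMonoidAlgebra.single 0 (vert K G (G.rng e))
        * AddMonoidAlgebra.single (-1) (ghost K G e)
      = AddMonoidAlgebra.single (-1) (ghost K G e)
    rw [AddMonoidAlgebra.single_mul_single, vert_mul_ghost, if_pos rfl, zero_add]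
  | ghost_src e =>
    simp only [map_mul, FreeAlgebra.lift_ι_apply]
    show AddMonoidAlgebra.single (-1) (ghost K G e)
        * AddMonoidAlgebra.single 0 (vert K G (G.src e))
      = AddMonoidAlgebra.single (-1) (ghost K G e)
    rw [AddMonoidAlgebra.single_mul_single, ghost_mul_vert, if_pos rfl, add_zero]
  | ck1 e =>
    simp only [map_mul, FreeAlgebra.lift_ι_apply]
    show AddMonoidAlgebra.single (-1) (ghost K G e) * AddMonoidAlgebra.single 1 (edge K G e)
      = AddMonoidAlgebra.single 0 (vert K G (G.rng e))
    rw [AddMonoidAlgebra.single_mul_single, ghost_mul_edge, if_pos rfl]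
    norm_num
  | @ck1_orth e f h =>
    simp only [map_mul, map_zero, FreeAlgebra.lift_ι_apply]
    show AddMonoidAlgebra.single (-1) (ghost K G e) * AddMonoidAlgebra.single 1 (edge K G f) = 0
    rw [AddMonoidAlgebra.single_mul_single, ghost_mul_edge, if_neg h]
    exact AddMonoidAlgebra.single_zero _
  | ck2 u S hS hsrc =>
    rw [map_sum, FreeAlgebra.lift_ι_apply]
    show AddMonoidAlgebra.single 0 (vert K G u) = _
    rw [ck2_sum u S hS hsrc (K := K)]
    refine Eq.trans (AddMonoidAlgebra.single_finset_sum S (fun e => edge K G e * ghost K G e) 0) ?_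
    refine Finset.sum_congr rfl (fun e _ => ?_)
    simp only [map_mul, FreeAlgebra.lift_ι_apply]
    show AddMonoidAlgebra.single 0 (edge K G e * ghost K G e)
      = AddMonoidAlgebra.single 1 (edge K G e) * AddMonoidAlgebra.single (-1) (ghost K G e)
    rw [AddMonoidAlgebra.single_mul_single, show ((1:ℤ) + -1) = 0 by norm_num]

/-- The grading homomorphism into the algebra of Laurent-type polynomials. -/
noncomputable def Theta (K : Type) [Field K] (G : DGraph) :
    LPA K G →ₐ[K] AddMonoidAlgebra (LPA K G) ℤ :=
  RingQuot.liftAlgHom K ⟨FreeAlgebra.lift K (thetaGen K G), thetaRel K G⟩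

lemma Theta_mk (x : FreeAlgebra K (LGen G)) :
    Theta K G (RingQuot.mkAlgHom K (LRel K G) x) = FreeAlgebra.lift K (thetaGen K G) x :=
  RingQuot.liftAlgHom_mkAlgHom_apply K _ (thetaRel K G) x

lemma Theta_vert (u : G.V) :
    Theta K G (vert K G u) = AddMonoidAlgebra.single 0 (vert K G u) := by
  rw [show vert K G u = RingQuot.mkAlgHom K (LRel K G) (FreeAlgebra.ι K (LGen.v u)) from rfl,
    Theta_mk, FreeAlgebra.lift_ι_apply]
  rfl

lemma Theta_edge (e : G.E) :
    Theta K G (edge K G e) = AddMonoidAlgebra.single 1 (edge K G e) := by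
  rw [show edge K G e = RingQuot.mkAlgHom K (LRel K G) (FreeAlgebra.ι K (LGen.e e)) from rfl,
    Theta_mk, FreeAlgebra.lift_ι_apply]
  rfl

lemma Theta_ghost (e : G.E) :
    Theta K G (ghost K G e) = AddMonoidAlgebra.single (-1) (ghost K G e) := by
  rw [show ghost K G e = RingQuot.mkAlgHom K (LRel K G) (FreeAlgebra.ι K (LGen.g e)) from rfl,
    Theta_mk, FreeAlgebra.lift_ι_apply]
  rfl

lemma Theta_pathElem {u w : G.V} (α : Path G u w) :
    Theta K G (pathElem K G α) = AddMonoidAlgebra.single (α.length : ℤ) (pathElem K G α) := by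
  induction α with
  | nil v => rw [pathElem_nil, Theta_vert]; norm_num
  | cons e p ih =>
    have hlen : (1 : ℤ) + (p.length : ℤ) = ((Path.cons e p).length : ℤ) := by
      rw [length_cons]; push_cast; ring
    rw [pathElem_cons, map_mul, Theta_edge, ih, AddMonoidAlgebra.single_mul_single, hlen,
      ← pathElem_cons]

lemma Theta_pathElemStar {u w : G.V} (β : Path G u w) :
    Theta K G (pathElemStar K G β)
      = AddMonoidAlgebra.single (-(β.length : ℤ)) (pathElemStar K G β) := by
  induction β with
  | nil v => rw [pathElemStar_nil, Theta_vert]; norm_num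
  | cons e p ih =>
    have hlen : (-(p.length : ℤ)) + (-1) = -(((Path.cons e p).length : ℤ)) := by
      rw [length_cons]; push_cast; ring
    rw [pathElemStar_cons, map_mul, Theta_ghost, ih, AddMonoidAlgebra.single_mul_single, hlen,
      ← pathElemStar_cons]

lemma Theta_grade {n : ℤ} {x : LPA K G} (hx : x ∈ grade K G n) :
    Theta K G x = AddMonoidAlgebra.single n x := by
  rw [grade_def] at hx
  refine Submodule.span_induction ?_ ?_ ?_ ?_ hx
  · rintro z ⟨u, u', w, α, β, hdeg, rfl⟩
    rw [map_mul, Theta_pathElem, Theta_pathElemStar, AddMonoidAlgebra.single_mul_single,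
      show (α.length : ℤ) + -(β.length : ℤ) = n from by omega]
  · simp
  · intro a b _ _ ha hb
    rw [map_add, ha, hb, ← AddMonoidAlgebra.single_add]
  · intro t a _ ha
    rw [map_smul, ha, AddMonoidAlgebra.smul_single]

/-- The counit summing all coefficients. -/
noncomputable def eps (K : Type) [Field K] (G : DGraph) :
    AddMonoidAlgebra (LPA K G) ℤ →+* LPA K G :=
  AddMonoidAlgebra.liftNCRingHom (RingHom.id _) 1 (fun _ _ => Commute.one_right _)

lemma eps_single (n : ℤ) (r : LPA K G) :
    eps K G (AddMonoidAlgebra.single n r) = r := by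
  rw [eps, AddMonoidAlgebra.liftNCRingHom]
  show AddMonoidAlgebra.liftNC _ _ _ = r
  rw [AddMonoidAlgebra.liftNC_single]
  simp

lemma eps_apply (y : AddMonoidAlgebra (LPA K G) ℤ) :
    eps K G y = y.coeff.sum fun _ r => r := by
  conv_lhs => rw [← AddMonoidAlgebra.sum_coeff_single y]
  rw [map_finsuppSum]
  exact Finsupp.sum_congr (fun n _ => eps_single n (y.coeff n))

lemma eps_Theta (z : LPA K G) : eps K G (Theta K G z) = z := by
  obtain ⟨y, rfl⟩ := RingQuot.mkAlgHom_surjective K (LRel K G) z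
  induction y using FreeAlgebra.induction with
  | grade0 r =>
    rw [AlgHom.commutes (RingQuot.mkAlgHom K (LRel K G))]
    show eps K G (Theta K G (algebraMap K (LPA K G) r)) = algebraMap K (LPA K G) r
    rw [AlgHom.commutes, Algebra.algebraMap_eq_smul_one (A := AddMonoidAlgebra (LPA K G) ℤ),
      AddMonoidAlgebra.one_def, AddMonoidAlgebra.smul_single, eps_single,
      ← Algebra.algebraMap_eq_smul_one]
  | grade1 x =>
    cases x with
    | v u =>
      show eps K G (Theta K G (vert K G u)) = vert K G u
      rw [Theta_vert, eps_single]
    | e e =>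
      show eps K G (Theta K G (edge K G e)) = edge K G e
      rw [Theta_edge, eps_single]
    | g e =>
      show eps K G (Theta K G (ghost K G e)) = ghost K G e
      rw [Theta_ghost, eps_single]
  | mul a b ha hb =>
    rw [map_mul]
    exact ((congrArg (eps K G) (map_mul (Theta K G) _ _)).trans (map_mul (eps K G) _ _)).trans
      (congrArg₂ (· * ·) ha hb)
  | add a b ha hb =>
    rw [map_add]
    exact ((congrArg (eps K G) (map_add (Theta K G) _ _)).trans (map_add (eps K G) _ _)).trans
      (congrArg₂ (· + ·) ha hb)

/-- Extended homogeneous component: for degree `0` we add scalars. -/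
noncomputable def gradep (n : ℤ) : Submodule K (LPA K G) :=
  grade K G n ⊔ Submodule.span K {x : LPA K G | n = 0 ∧ x = 1}

lemma grade_le_gradep (n : ℤ) : grade K G n ≤ gradep (K := K) (G := G) n := le_sup_left

lemma one_mem_gradep : (1 : LPA K G) ∈ gradep (K := K) (G := G) 0 :=
  Submodule.mem_sup_right (Submodule.subset_span ⟨rfl, rfl⟩)

lemma grade_mul_span1 {m n : ℤ} {x y : LPA K G} (hx : x ∈ grade K G m)
    (hy : y ∈ Submodule.span K {z : LPA K G | n = 0 ∧ z = 1}) :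
    x * y ∈ grade K G (m + n) := by
  refine Submodule.span_induction ?_ ?_ ?_ ?_ hy
  · rintro z ⟨rfl, rfl⟩
    rw [mul_one, add_zero]; exact hx
  · rw [mul_zero]; exact Submodule.zero_mem _
  · intro a b _ _ ha hb; rw [mul_add]; exact Submodule.add_mem _ ha hb
  · intro t a _ ha; rw [mul_smul_comm]; exact Submodule.smul_mem _ _ ha

lemma span1_mul_grade {m n : ℤ} {x y : LPA K G} (hy : y ∈ grade K G n)
    (hx : x ∈ Submodule.span K {z : LPA K G | m = 0 ∧ z = 1}) :
    x * y ∈ grade K G (m + n) := by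
  refine Submodule.span_induction ?_ ?_ ?_ ?_ hx
  · rintro z ⟨rfl, rfl⟩
    rw [one_mul, zero_add]; exact hy
  · rw [zero_mul]; exact Submodule.zero_mem _
  · intro a b _ _ ha hb; rw [add_mul]; exact Submodule.add_mem _ ha hb
  · intro t a _ ha; rw [smul_mul_assoc]; exact Submodule.smul_mem _ _ ha

lemma grade_mul_gradep {m n : ℤ} {x y : LPA K G} (hx : x ∈ grade K G m)
    (hy : y ∈ gradep (K := K) (G := G) n) : x * y ∈ grade K G (m + n) := by
  obtain ⟨y₀, hy₀, y₁, hy₁, rfl⟩ := Submodule.mem_sup.mp hy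
  rw [mul_add]
  exact Submodule.add_mem _ (grade_mul_grade hx hy₀) (grade_mul_span1 hx hy₁)

lemma gradep_mul_grade {m n : ℤ} {x y : LPA K G} (hx : x ∈ gradep (K := K) (G := G) m)
    (hy : y ∈ grade K G n) : x * y ∈ grade K G (m + n) := by
  obtain ⟨x₀, hx₀, x₁, hx₁, rfl⟩ := Submodule.mem_sup.mp hx
  rw [add_mul]
  exact Submodule.add_mem _ (grade_mul_grade hx₀ hy) (span1_mul_grade hy hx₁)

lemma span1_mul_gradep {m n : ℤ} {x y : LPA K G}
    (hx : x ∈ Submodule.span K {z : LPA K G | m = 0 ∧ z = 1})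
    (hy : y ∈ gradep (K := K) (G := G) n) : x * y ∈ gradep (K := K) (G := G) (m + n) := by
  refine Submodule.span_induction ?_ ?_ ?_ ?_ hx
  · rintro z ⟨rfl, rfl⟩
    rw [one_mul, zero_add]; exact hy
  · rw [zero_mul]; exact Submodule.zero_mem _
  · intro a b _ _ ha hb; rw [add_mul]; exact Submodule.add_mem _ ha hb
  · intro t a _ ha; rw [smul_mul_assoc]; exact Submodule.smul_mem _ _ ha

lemma gradep_mul_gradep {m n : ℤ} {x y : LPA K G} (hx : x ∈ gradep (K := K) (G := G) m)
    (hy : y ∈ gradep (K := K) (G := G) n) : x * y ∈ gradep (K := K) (G := G) (m + n) := by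
  obtain ⟨x₀, hx₀, x₁, hx₁, rfl⟩ := Submodule.mem_sup.mp hx
  rw [add_mul]
  exact Submodule.add_mem _ (grade_le_gradep _ (grade_mul_gradep hx₀ hy))
    (span1_mul_gradep hx₁ hy)

/-- Every element of the algebra: scalar plus monomial span. -/
lemma span_TSet_top (z : LPA K G) :
    z ∈ Submodule.span K {x : LPA K G | x = 1 ∨ ∃ (u u' w : G.V) (α : Path G u w)
      (β : Path G u' w), x = pathElem K G α * pathElemStar K G β} := by
  set TS : Set (LPA K G) := {x : LPA K G | x = 1 ∨ ∃ (u u' w : G.V) (α : Path G u w)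
      (β : Path G u' w), x = pathElem K G α * pathElemStar K G β} with hTS
  have hone : (1 : LPA K G) ∈ TS := Or.inl rfl
  have hgrade : ∀ n : ℤ, grade K G n ≤ Submodule.span K TS := by
    intro n
    rw [grade_def]
    refine Submodule.span_le.mpr ?_
    rintro x ⟨u, u', w, α, β, _, rfl⟩
    exact Submodule.subset_span (Or.inr ⟨u, u', w, α, β, rfl⟩)
  have hmul : ∀ a ∈ Submodule.span K TS, ∀ b ∈ Submodule.span K TS,
      a * b ∈ Submodule.span K TS := by
    intro a ha b hb
    refine Submodule.span_induction ?_ ?_ ?_ ?_ ha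
    · intro x hx
      refine Submodule.span_induction ?_ ?_ ?_ ?_ hb
      · intro y hy
        rcases hx with rfl | ⟨u, u', w, α, β, rfl⟩
        · rw [one_mul]; exact Submodule.subset_span hy
        · rcases hy with rfl | ⟨a', c', b', γ, δ, rfl⟩
          · rw [mul_one]; exact Submodule.subset_span (Or.inr ⟨u, u', w, α, β, rfl⟩)
          · exact hgrade _ (grade_mul_grade (monomial_mem_grade α β rfl)
              (monomial_mem_grade γ δ rfl))
      · rw [mul_zero]; exact Submodule.zero_mem _
      · intro p q _ _ hp hq; rw [mul_add]; exact Submodule.add_mem _ hp hq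
      · intro t p _ hp; rw [mul_smul_comm]; exact Submodule.smul_mem _ _ hp
    · rw [zero_mul]; exact Submodule.zero_mem _
    · intro p q _ _ hp hq; rw [add_mul]; exact Submodule.add_mem _ hp hq
    · intro t p _ hp; rw [smul_mul_assoc]; exact Submodule.smul_mem _ _ hp
  obtain ⟨y, rfl⟩ := RingQuot.mkAlgHom_surjective K (LRel K G) z
  induction y using FreeAlgebra.induction with
  | grade0 r =>
    rw [AlgHom.commutes (RingQuot.mkAlgHom K (LRel K G))]
    show algebraMap K (LPA K G) r ∈ Submodule.span K TS
    rw [Algebra.algebraMap_eq_smul_one]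
    exact Submodule.smul_mem _ _ (Submodule.subset_span hone)
  | grade1 x =>
    cases x with
    | v u =>
      exact hgrade 0 (vert_mem_grade u)
    | e e =>
      show edge K G e ∈ Submodule.span K TS
      refine hgrade 1 ?_
      have h := monomial_mem_grade (K := K) (Path.cons e (Path.nil (G.rng e)))
        (Path.nil (G.rng e)) (n := 1) (by simp)
      rwa [pathElemStar_nil, pathElem_cons, pathElem_nil, mul_assoc, vert_mul_vert,
        if_pos rfl, edge_mul_vert, if_pos rfl] at h
    | g e =>
      show ghost K G e ∈ Submodule.span K TS
      refine hgrade (-1) ?_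
      have h := monomial_mem_grade (K := K) (Path.nil (G.rng e))
        (Path.cons e (Path.nil (G.rng e))) (n := -1) (by simp)
      rwa [pathElem_nil, pathElemStar_cons, pathElemStar_nil, ← mul_assoc, vert_mul_vert,
        if_pos rfl, vert_mul_ghost, if_pos rfl] at h
  | mul a b ha hb => rw [map_mul]; exact hmul _ ha _ hb
  | add a b ha hb => rw [map_add]; exact Submodule.add_mem _ ha hb

/-- Components of Θ are (extended-)homogeneous. -/
lemma Theta_apply_mem_gradep (z : LPA K G) (d : ℤ) :
    (Theta K G z).coeff d ∈ gradep (K := K) (G := G) d := by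
  have hz := span_TSet_top (K := K) (G := G) z
  refine Submodule.span_induction ?_ ?_ ?_ ?_ hz
  · rintro x (rfl | ⟨u, u', w, α, β, rfl⟩)
    · rw [map_one, AddMonoidAlgebra.one_def]
      rw [AddMonoidAlgebra.coeff_single, Finsupp.single_apply]
      split_ifs with h
      · subst h; exact one_mem_gradep
      · exact Submodule.zero_mem _
    · rw [Theta_grade (monomial_mem_grade α β rfl), AddMonoidAlgebra.coeff_single,
      Finsupp.single_apply]
      split_ifs with h
      · subst h; exact grade_le_gradep _ (monomial_mem_grade α β rfl)
      · exact Submodule.zero_mem _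
  · rw [map_zero]; exact Submodule.zero_mem _
  · intro a b _ _ ha hb
    rw [map_add, AddMonoidAlgebra.coeff_add, Finsupp.add_apply]
    exact Submodule.add_mem _ ha hb
  · intro t a _ ha
    rw [map_smul, AddMonoidAlgebra.coeff_smul, Finsupp.smul_apply]
    exact Submodule.smul_mem _ _ ha

lemma Theta_gradep {d : ℤ} {y : LPA K G} (hy : y ∈ gradep (K := K) (G := G) d) :
    Theta K G y = AddMonoidAlgebra.single d y := by
  obtain ⟨y₀, hy₀, y₁, hy₁, rfl⟩ := Submodule.mem_sup.mp hy
  have h1 : Theta K G y₁ = AddMonoidAlgebra.single d y₁ := by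
    refine Submodule.span_induction ?_ ?_ ?_ ?_ hy₁
    · rintro z ⟨rfl, rfl⟩
      rw [map_one, AddMonoidAlgebra.one_def]
    · simp
    · intro a b _ _ ha hb
      rw [map_add, ha, hb, ← AddMonoidAlgebra.single_add]
    · intro t a _ ha
      rw [map_smul, ha]
      exact (AddMonoidAlgebra.smul_single _ _ _)
  rw [map_add, Theta_grade hy₀, h1, ← AddMonoidAlgebra.single_add]


-- ## Chunk 4a: graded semiprimeness -- preliminaries

lemma sandwich0 {R : Type*} [Ring R] {c : R} (h : ∀ r : R, c * r * c = 0) (p q : R) :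
    ∀ r : R, (p * c * q) * r * (p * c * q) = 0 := by
  intro r
  calc (p * c * q) * r * (p * c * q) = p * (c * (q * r * p) * c) * q := by
        simp only [mul_assoc]
    _ = 0 := by rw [h (q * r * p), mul_zero, zero_mul]

lemma sandwichL {R : Type*} [Ring R] {c : R} (h : ∀ r : R, c * r * c = 0) (p : R) :
    ∀ r : R, (p * c) * r * (p * c) = 0 := by
  intro r
  calc (p * c) * r * (p * c) = p * (c * (r * p) * c) := by simp only [mul_assoc]
    _ = 0 := by rw [h (r * p), mul_zero]

lemma sandwichR {R : Type*} [Ring R] {c : R} (h : ∀ r : R, c * r * c = 0) (q : R) :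
    ∀ r : R, (c * q) * r * (c * q) = 0 := by
  intro r
  calc (c * q) * r * (c * q) = (c * (q * r) * c) * q := by simp only [mul_assoc]
    _ = 0 := by rw [h (q * r), zero_mul]

/-- Degree-zero monomials of length at most `n`. -/
def SV (n : ℕ) : Set (LPA K G) :=
  {x : LPA K G | ∃ (u u' w : G.V) (α : Path G u w) (β : Path G u' w),
    α.length = β.length ∧ α.length ≤ n ∧ x = pathElem K G α * pathElemStar K G β}

lemma vert_mem_SVspan (w : G.V) (n : ℕ) :
    vert K G w ∈ Submodule.span K (SV (K := K) (G := G) n) := by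
  have h2 : vert K G w = vert K G w * vert K G w := by rw [vert_mul_vert, if_pos rfl]
  rw [h2]
  exact Submodule.subset_span ⟨w, w, w, Path.nil w, Path.nil w, rfl, by simp, rfl⟩

lemma SV_mono {a b : ℕ} (h : a ≤ b) : SV (K := K) (G := G) a ⊆ SV (K := K) (G := G) b := by
  rintro x ⟨u, u', w, α, β, hlen, hle, rfl⟩
  exact ⟨u, u', w, α, β, hlen, le_trans hle h, rfl⟩

lemma grade0_mem_SVspan {c : LPA K G} (hc : c ∈ grade K G 0) :
    ∃ n : ℕ, c ∈ Submodule.span K (SV (K := K) (G := G) n) := by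
  rw [grade_def] at hc
  obtain ⟨l, hsupp, hsum⟩ := Submodule.mem_span_set.mp hc
  have H : ∀ m ∈ l.support, ∃ nm : ℕ, m ∈ SV (K := K) (G := G) nm := by
    intro m hm
    obtain ⟨u, u', w, α, β, hdeg, heq⟩ := hsupp (Finsupp.mem_support_iff.mp hm
      |> fun h => Finsupp.mem_support_iff.mpr h)
    exact ⟨α.length, u, u', w, α, β, by omega, le_rfl, heq⟩
  choose nm hnm using H
  refine ⟨l.support.attach.sup (fun m => nm m.1 m.2), ?_⟩
  rw [← hsum]
  refine Submodule.finsuppSum_mem _ _ _ _ (fun m hm => ?_)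
  refine Submodule.smul_mem _ _ (Submodule.subset_span ?_)
  have hm' : m ∈ l.support := Finsupp.mem_support_iff.mpr hm
  refine SV_mono ?_ (hnm m hm')
  exact Finset.le_sup (f := fun m : {x // x ∈ l.support} => nm m.1 m.2)
    (Finset.mem_attach _ ⟨m, hm'⟩)

lemma pathElem_len0 {u w : G.V} (p : Path G u w) (h : p.length = 0) :
    pathElem K G p = vert K G w := by
  cases p with
  | nil v => rfl
  | cons e q => simp at h

lemma pathElemStar_len0 {u w : G.V} (p : Path G u w) (h : p.length = 0) :
    pathElemStar K G p = vert K G w := by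
  cases p with
  | nil v => rfl
  | cons e q => simp at h

lemma exists_head {u w : G.V} (p : Path G u w) (h : p.length ≠ 0) :
    ∃ (e : G.E) (q : Path G (G.rng e) w), u = G.src e ∧ p.length = q.length + 1 ∧
      pathElem K G p = edge K G e * pathElem K G q ∧
      pathElemStar K G p = pathElemStar K G q * ghost K G e := by
  cases p with
  | nil v => simp at h
  | cons e q => exact ⟨e, q, rfl, rfl, rfl, rfl⟩

lemma RED {n : ℕ} {c : LPA K G} (hc : c ∈ Submodule.span K (SV (K := K) (G := G) (n+1)))
    (e f : G.E) :
    (ghost K G e * c) * edge K G f ∈ Submodule.span K (SV (K := K) (G := G) n) := by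
  refine Submodule.span_induction ?_ ?_ ?_ ?_ hc
  · rintro m ⟨u, u', w, α, β, hlen, hle, rfl⟩
    by_cases hl : α.length = 0
    · rw [pathElem_len0 α hl, pathElemStar_len0 β (by omega), vert_mul_vert, if_pos rfl,
        ghost_mul_vert]
      split_ifs with h
      · rw [ghost_mul_edge]
        split_ifs with h2
        · exact vert_mem_SVspan _ _
        · exact Submodule.zero_mem _
      · rw [zero_mul]; exact Submodule.zero_mem _
    · obtain ⟨e', α', hsrc, hlen', hPE, _⟩ := exists_head (K := K) α hl
      obtain ⟨f', β', hsrc', hlenβ, _, hSE⟩ := exists_head (K := K) β (by omega)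
      rw [hPE, hSE]
      have h1 : ghost K G e * (edge K G e' * pathElem K G α'
            * (pathElemStar K G β' * ghost K G f'))
          = (ghost K G e * edge K G e') * (pathElem K G α' * pathElemStar K G β')
            * ghost K G f' := by
        simp only [mul_assoc]
      rw [h1, ghost_mul_edge]
      by_cases h : e = e'
      · rw [if_pos h]
        subst h
        have h2 : vert K G (G.rng e) * (pathElem K G α' * pathElemStar K G β')
            = pathElem K G α' * pathElemStar K G β' := by
          rw [← mul_assoc, vert_mul_pathElem, if_pos rfl]
        rw [h2, mul_assoc, ghost_mul_edge]
        by_cases h3 : f' = f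
        · rw [if_pos h3]
          have h4 : pathElemStar K G β' * vert K G (G.rng f')
              = pathElemStar K G β' := by
            rw [pathElemStar_mul_vert, if_pos rfl]
          rw [mul_assoc, h4]
          exact Submodule.subset_span ⟨G.rng e, G.rng f', w, α', β', by omega, by omega, rfl⟩
        · rw [if_neg h3]
          simp only [mul_zero]
          exact Submodule.zero_mem _
      · rw [if_neg h]
        simp only [zero_mul, mul_zero]
        exact Submodule.zero_mem _
  · rw [mul_zero, zero_mul]; exact Submodule.zero_mem _
  · intro a b _ _ ha hb
    rw [mul_add, add_mul]
    exact Submodule.add_mem _ ha hb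
  · intro t a _ ha
    rw [mul_smul_comm, smul_mul_assoc]
    exact Submodule.smul_mem _ _ ha

lemma DEC0 {c : LPA K G} (hc : c ∈ Submodule.span K (SV (K := K) (G := G) 0)) :
    ∃ lam : G.V →₀ K, c = lam.sum (fun w t => t • vert K G w) := by
  refine Submodule.span_induction ?_ ?_ ?_ ?_ hc
  · rintro m ⟨u, u', w, α, β, hlen, hle, rfl⟩
    refine ⟨Finsupp.single w 1, ?_⟩
    rw [pathElem_len0 α (by omega), pathElemStar_len0 β (by omega), vert_mul_vert,
      if_pos rfl, Finsupp.sum_single_index (by simp), one_smul]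
  · exact ⟨0, by simp⟩
  · rintro a b _ _ ⟨la, rfl⟩ ⟨lb, rfl⟩
    refine ⟨la + lb, ?_⟩
    rw [Finsupp.sum_add_index (by simp) (fun w _ t1 t2 => add_smul t1 t2 _)]
  · rintro t a _ ⟨la, rfl⟩
    refine ⟨t • la, ?_⟩
    rw [Finsupp.sum_smul_index (by simp), Finsupp.smul_sum]
    exact Finsupp.sum_congr (fun w _ => smul_smul t _ _)


-- ## Chunk 4b: the self-referential decomposition and degree-0 semiprimeness

lemma eg_mul_eg (e f : G.E) :
    (edge K G e * ghost K G e) * (edge K G f * ghost K G f)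
      = if e = f then edge K G e * ghost K G e else 0 := by
  have h1 : (edge K G e * ghost K G e) * (edge K G f * ghost K G f)
      = edge K G e * (ghost K G e * edge K G f) * ghost K G f := by simp only [mul_assoc]
  rw [h1, ghost_mul_edge]
  split_ifs with h
  · subst h
    rw [edge_mul_vert, if_pos rfl]
  · simp only [mul_zero, zero_mul]

lemma vert_mul_eg (w : G.V) (e : G.E) :
    vert K G w * (edge K G e * ghost K G e)
      = if w = G.src e then edge K G e * ghost K G e else 0 := by
  rw [← mul_assoc, vert_mul_edge]
  split_ifs with h
  · rfl
  · rw [zero_mul]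

lemma eg_mul_vert (e : G.E) (w : G.V) :
    (edge K G e * ghost K G e) * vert K G w
      = if w = G.src e then edge K G e * ghost K G e else 0 := by
  rw [mul_assoc, ghost_mul_vert]
  split_ifs with h
  · rfl
  · rw [mul_zero]

/-- The self-referential decomposition of a degree-zero element. -/
lemma DEC {n : ℕ} {c : LPA K G} (hc : c ∈ Submodule.span K (SV (K := K) (G := G) n)) :
    ∃ (lam : G.V →₀ K) (F : Finset G.E), ∀ F' : Finset G.E, F ⊆ F' →
      c = lam.sum (fun w t => t • vert K G w)
        + (∑ e ∈ F', ∑ f ∈ F', (edge K G e * ((ghost K G e * c) * edge K G f)) * ghost K G f)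
        - (∑ e ∈ F', lam (G.src e) • (edge K G e * ghost K G e)) := by
  refine Submodule.span_induction ?_ ?_ ?_ ?_ hc
  · rintro m ⟨u, u', w, α, β, hlen, hle, rfl⟩
    by_cases hl : α.length = 0
    · -- vertex monomial
      rw [pathElem_len0 α hl, pathElemStar_len0 β (by omega), vert_mul_vert, if_pos rfl]
      refine ⟨Finsupp.single w 1, ∅, fun F' _ => ?_⟩
      have hterm : ∀ e f : G.E,
          (edge K G e * ((ghost K G e * vert K G w) * edge K G f)) * ghost K G f
            = if e = f then (if w = G.src e then edge K G e * ghost K G e else 0) else 0 := by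
        intro e f
        rw [ghost_mul_vert]
        by_cases h : w = G.src e
        · rw [if_pos h, ghost_mul_edge]
          by_cases h2 : e = f
          · rw [if_pos h2, if_pos h2, if_pos h]
            subst h2
            rw [edge_mul_vert, if_pos rfl]
          · rw [if_neg h2, if_neg h2]
            simp only [mul_zero, zero_mul]
        · rw [if_neg h]
          simp only [zero_mul, mul_zero]
          by_cases h2 : e = f
          · rw [if_pos h2, if_neg h]
          · rw [if_neg h2]
      have hmid : (∑ e ∈ F', ∑ f ∈ F',
            (edge K G e * ((ghost K G e * vert K G w) * edge K G f)) * ghost K G f)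
          = ∑ e ∈ F', (if w = G.src e then edge K G e * ghost K G e else 0) := by
        refine Finset.sum_congr rfl (fun e he => ?_)
        rw [Finset.sum_congr rfl (fun f _ => hterm e f), Finset.sum_ite_eq, if_pos he]
      have hcor : (∑ e ∈ F', (Finsupp.single w (1:K)) (G.src e) • (edge K G e * ghost K G e))
          = ∑ e ∈ F', (if w = G.src e then edge K G e * ghost K G e else 0) := by
        refine Finset.sum_congr rfl (fun e he => ?_)
        rw [Finsupp.single_apply]
        split_ifs with h
        · rw [one_smul]
        · rw [zero_smul]
      rw [hmid, hcor, add_sub_cancel_right, Finsupp.sum_single_index (by simp), one_smul]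
    · -- monomial of positive length
      obtain ⟨e₀, α', hsrc, hlen', hPE, _⟩ := exists_head (K := K) α hl
      obtain ⟨f₀, β', hsrc', hlenβ, _, hSE⟩ := exists_head (K := K) β (by omega)
      rw [hPE, hSE]
      refine ⟨0, {e₀, f₀}, fun F' hF => ?_⟩
      have he₀ : e₀ ∈ F' := hF (by simp)
      have hf₀ : f₀ ∈ F' := hF (by simp)
      set m := (edge K G e₀ * pathElem K G α') * (pathElemStar K G β' * ghost K G f₀) with hm
      have hterm : ∀ e f : G.E,
          (edge K G e * ((ghost K G e * m) * edge K G f)) * ghost K G f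
            = if e = e₀ then (if f = f₀ then m else 0) else 0 := by
        intro e f
        have hge : ghost K G e * m
            = if e = e₀ then pathElem K G α' * (pathElemStar K G β' * ghost K G f₀)
              else 0 := by
          rw [hm, show ghost K G e * (edge K G e₀ * pathElem K G α'
                * (pathElemStar K G β' * ghost K G f₀))
              = ((ghost K G e * edge K G e₀) * pathElem K G α')
                * (pathElemStar K G β' * ghost K G f₀) from by simp only [mul_assoc],
            ghost_mul_edge]
          split_ifs with h
          · subst h
            rw [show ((vert K G (G.rng e) * pathElem K G α')
                  * (pathElemStar K G β' * ghost K G f₀))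
                = (vert K G (G.rng e) * pathElem K G α')
                  * (pathElemStar K G β' * ghost K G f₀) from rfl,
              vert_mul_pathElem, if_pos rfl]
          · simp only [zero_mul]
        rw [hge]
        by_cases h : e = e₀
        · rw [if_pos h, if_pos h]
          have h2 : (pathElem K G α' * (pathElemStar K G β' * ghost K G f₀)) * edge K G f
              = if f = f₀ then pathElem K G α' * pathElemStar K G β' else 0 := by
            rw [show (pathElem K G α' * (pathElemStar K G β' * ghost K G f₀)) * edge K G f
                = pathElem K G α' * (pathElemStar K G β' * (ghost K G f₀ * edge K G f))
                from by simp only [mul_assoc], ghost_mul_edge]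
            by_cases h3 : f = f₀
            · rw [if_pos h3.symm, if_pos h3, pathElemStar_mul_vert, if_pos rfl]
            · rw [if_neg (fun hh => h3 hh.symm), if_neg h3]
              simp only [mul_zero]
          rw [h2]
          by_cases h3 : f = f₀
          · rw [if_pos h3, if_pos h3, hm]
            subst h
            subst h3
            simp only [mul_assoc]
          · rw [if_neg h3, if_neg h3]
            simp only [mul_zero, zero_mul]
        · rw [if_neg h, if_neg h]
          simp only [mul_zero, zero_mul]
      have hin : ∀ e ∈ F', (∑ f ∈ F',
            (edge K G e * ((ghost K G e * m) * edge K G f)) * ghost K G f)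
          = if e = e₀ then m else 0 := by
        intro e _
        rw [Finset.sum_congr rfl (fun f _ => hterm e f)]
        by_cases h : e = e₀
        · rw [if_pos h]
          simp only [if_pos h]
          rw [Finset.sum_ite_eq' F' f₀ (fun _ => m), if_pos hf₀]
        · rw [if_neg h]
          simp only [if_neg h]
          exact Finset.sum_const_zero
      have hmid : (∑ e ∈ F', ∑ f ∈ F',
            (edge K G e * ((ghost K G e * m) * edge K G f)) * ghost K G f) = m := by
        rw [Finset.sum_congr rfl hin, Finset.sum_ite_eq' F' e₀ (fun _ => m), if_pos he₀]
      have hcor : (∑ e ∈ F', ((0 : G.V →₀ K) (G.src e)) • (edge K G e * ghost K G e))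
          = 0 := by
        refine Finset.sum_eq_zero (fun e _ => ?_)
        rw [Finsupp.zero_apply, zero_smul]
      rw [hmid, hcor, Finsupp.sum_zero_index, zero_add, sub_zero]
  · refine ⟨0, ∅, fun F' _ => ?_⟩
    have h1 : (∑ e ∈ F', ∑ f ∈ F',
        (edge K G e * ((ghost K G e * (0 : LPA K G)) * edge K G f)) * ghost K G f) = 0 := by
      refine Finset.sum_eq_zero (fun e _ => Finset.sum_eq_zero (fun f _ => ?_))
      rw [mul_zero, zero_mul, mul_zero, zero_mul]
    have h2 : (∑ e ∈ F', ((0 : G.V →₀ K) (G.src e)) • (edge K G e * ghost K G e)) = 0 := by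
      refine Finset.sum_eq_zero (fun e _ => ?_)
      rw [Finsupp.zero_apply, zero_smul]
    rw [h1, h2, Finsupp.sum_zero_index, zero_add, sub_zero]
  · rintro a b _ _ ⟨la, Fa, hda⟩ ⟨lb, Fb, hdb⟩
    refine ⟨la + lb, Fa ∪ Fb, fun F' hF => ?_⟩
    have hMadd : (∑ e ∈ F', ∑ f ∈ F',
          (edge K G e * ((ghost K G e * (a + b)) * edge K G f)) * ghost K G f)
        = (∑ e ∈ F', ∑ f ∈ F',
            (edge K G e * ((ghost K G e * a) * edge K G f)) * ghost K G f)
          + (∑ e ∈ F', ∑ f ∈ F',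
            (edge K G e * ((ghost K G e * b) * edge K G f)) * ghost K G f) := by
      rw [← Finset.sum_add_distrib]
      refine Finset.sum_congr rfl (fun e _ => ?_)
      rw [← Finset.sum_add_distrib]
      refine Finset.sum_congr rfl (fun f _ => ?_)
      rw [mul_add, add_mul, mul_add, add_mul]
    have hVadd : (la + lb).sum (fun w t => t • vert K G w)
        = la.sum (fun w t => t • vert K G w) + lb.sum (fun w t => t • vert K G w) :=
      Finsupp.sum_add_index (by simp) (fun w _ t1 t2 => add_smul t1 t2 _)
    have hCadd : (∑ e ∈ F', ((la + lb) (G.src e)) • (edge K G e * ghost K G e))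
        = (∑ e ∈ F', (la (G.src e)) • (edge K G e * ghost K G e))
          + (∑ e ∈ F', (lb (G.src e)) • (edge K G e * ghost K G e)) := by
      rw [← Finset.sum_add_distrib]
      refine Finset.sum_congr rfl (fun e _ => ?_)
      rw [Finsupp.add_apply, add_smul]
    conv_lhs => rw [hda F' (Finset.union_subset_iff.mp hF).1,
      hdb F' (Finset.union_subset_iff.mp hF).2]
    rw [hMadd, hVadd, hCadd, sub_add_sub_comm, add_add_add_comm]
  · rintro t a _ ⟨la, Fa, hda⟩
    refine ⟨t • la, Fa, fun F' hF => ?_⟩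
    have hMs : (∑ e ∈ F', ∑ f ∈ F',
          (edge K G e * ((ghost K G e * (t • a)) * edge K G f)) * ghost K G f)
        = t • (∑ e ∈ F', ∑ f ∈ F',
            (edge K G e * ((ghost K G e * a) * edge K G f)) * ghost K G f) := by
      rw [Finset.smul_sum]
      refine Finset.sum_congr rfl (fun e _ => ?_)
      rw [Finset.smul_sum]
      refine Finset.sum_congr rfl (fun f _ => ?_)
      rw [mul_smul_comm, smul_mul_assoc, mul_smul_comm, smul_mul_assoc]
    have hVs : (t • la).sum (fun w s => s • vert K G w)
        = t • la.sum (fun w s => s • vert K G w) := by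
      rw [Finsupp.sum_smul_index (by simp), Finsupp.smul_sum]
      exact Finsupp.sum_congr (fun w _ => (smul_smul t _ _).symm)
    have hCs : (∑ e ∈ F', ((t • la) (G.src e)) • (edge K G e * ghost K G e))
        = t • (∑ e ∈ F', (la (G.src e)) • (edge K G e * ghost K G e)) := by
      rw [Finset.smul_sum]
      refine Finset.sum_congr rfl (fun e _ => ?_)
      rw [Finsupp.smul_apply, smul_smul]
      rfl
    rw [hMs, hVs, hCs]
    conv_lhs => rw [hda F' hF]
    rw [smul_sub, smul_add]


-- ## Chunk 4c: endgame for degree-zero semiprimeness, graded semiprimeness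

/-- Sum of `e e*` over edges in `F` with source `w`. -/
noncomputable def EwF (F : Finset G.E) (w : G.V) : LPA K G :=
  ∑ e ∈ F.filter (fun e => G.src e = w), edge K G e * ghost K G e

/-- The corner idempotent at `w`. -/
noncomputable def Qel (F : Finset G.E) (w : G.V) : LPA K G :=
  vert K G w - EwF (K := K) (G := G) F w

lemma vert_mul_EwF (F : Finset G.E) (w w' : G.V) :
    vert K G w * EwF (K := K) (G := G) F w' = if w = w' then EwF (K := K) (G := G) F w' else 0 := by
  rw [EwF, Finset.mul_sum]
  split_ifs with h
  · subst h
    refine Finset.sum_congr rfl (fun e he => ?_)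
    rw [vert_mul_eg, if_pos (Finset.mem_filter.mp he).2.symm]
  · refine Finset.sum_eq_zero (fun e he => ?_)
    rw [vert_mul_eg, if_neg (fun hh => h (hh.trans (Finset.mem_filter.mp he).2))]

lemma EwF_mul_vert (F : Finset G.E) (w w' : G.V) :
    EwF (K := K) (G := G) F w * vert K G w' = if w = w' then EwF (K := K) (G := G) F w else 0 := by
  rw [EwF, Finset.sum_mul]
  split_ifs with h
  · subst h
    refine Finset.sum_congr rfl (fun e he => ?_)
    rw [eg_mul_vert, if_pos (Finset.mem_filter.mp he).2.symm]
  · refine Finset.sum_eq_zero (fun e he => ?_)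
    rw [eg_mul_vert, if_neg (fun hh => h (hh.trans (Finset.mem_filter.mp he).2).symm)]

lemma EwF_mul_EwF (F : Finset G.E) (w w' : G.V) :
    EwF (K := K) (G := G) F w * EwF (K := K) (G := G) F w'
      = if w = w' then EwF (K := K) (G := G) F w else 0 := by
  rw [EwF, EwF, Finset.sum_mul]
  split_ifs with h
  · subst h
    refine Finset.sum_congr rfl (fun e he => ?_)
    rw [Finset.mul_sum, Finset.sum_congr rfl (fun f _ => eg_mul_eg e f),
      Finset.sum_ite_eq _ e _, if_pos he]
  · refine Finset.sum_eq_zero (fun e he => ?_)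
    rw [Finset.mul_sum]
    refine Finset.sum_eq_zero (fun f hf => ?_)
    rw [eg_mul_eg, if_neg]
    intro hef
    exact h (((Finset.mem_filter.mp he).2.symm.trans (hef ▸ (Finset.mem_filter.mp hf).2)))

lemma Qel_def (F : Finset G.E) (w : G.V) :
    Qel (K := K) (G := G) F w = vert K G w - EwF (K := K) (G := G) F w := rfl

lemma Qel_mul_Qel (F : Finset G.E) (w w' : G.V) :
    Qel (K := K) (G := G) F w * Qel (K := K) (G := G) F w'
      = if w = w' then Qel (K := K) (G := G) F w else 0 := by
  rw [Qel_def, Qel_def, sub_mul, mul_sub, mul_sub, vert_mul_vert, vert_mul_EwF, EwF_mul_vert,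
    EwF_mul_EwF]
  split_ifs with h
  · subst h
    rw [sub_self, sub_zero]
  · simp only [sub_self]

lemma S0end (lam : G.V →₀ K) (F : Finset G.E) (c : LPA K G)
    (hc : c = lam.sum (fun w t => t • vert K G w)
      - ∑ e ∈ F, lam (G.src e) • (edge K G e * ghost K G e))
    (h : ∀ r : LPA K G, c * r * c = 0) : c = 0 := by
  have hC : (∑ e ∈ F, lam (G.src e) • (edge K G e * ghost K G e))
      = lam.sum (fun w t => t • EwF (K := K) (G := G) F w) := by
    have h1 : (∑ e ∈ F, lam (G.src e) • (edge K G e * ghost K G e))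
        = ∑ e ∈ F.filter (fun e => G.src e ∈ lam.support),
            lam (G.src e) • (edge K G e * ghost K G e) := by
      refine (Finset.sum_filter_of_ne (fun e _ hne => ?_)).symm
      rw [Finsupp.mem_support_iff]
      intro h0
      exact hne (by rw [h0, zero_smul])
    have h2 := Finset.sum_fiberwise_of_maps_to (s := F.filter (fun e => G.src e ∈ lam.support))
      (t := lam.support) (g := G.src)
      (fun e he => (Finset.mem_filter.mp he).2)
      (fun e => lam (G.src e) • (edge K G e * ghost K G e))
    rw [h1, ← h2, Finsupp.sum]
    refine Finset.sum_congr rfl (fun w hw => ?_)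
    have hset : (F.filter (fun e => G.src e ∈ lam.support)).filter (fun e => G.src e = w)
        = F.filter (fun e => G.src e = w) := by
      rw [Finset.filter_filter]
      refine Finset.filter_congr (fun e _ => ?_)
      constructor
      · rintro ⟨_, h2⟩; exact h2
      · intro h2; exact ⟨h2 ▸ hw, h2⟩
    rw [hset, EwF, Finset.smul_sum]
    refine Finset.sum_congr rfl (fun e he => ?_)
    rw [(Finset.mem_filter.mp he).2]
  have hcq : c = lam.sum (fun w t => t • Qel (K := K) (G := G) F w) := by
    rw [hc, hC, ← Finsupp.sum_sub]
    exact Finsupp.sum_congr (fun w _ => (smul_sub _ _ _).symm)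
  have hcQ : ∀ w : G.V, c * Qel (K := K) (G := G) F w
      = lam w • Qel (K := K) (G := G) F w := by
    intro w
    rw [hcq, Finsupp.sum_mul]
    have heq : (lam.sum fun w' t => (t • Qel (K := K) (G := G) F w')
          * Qel (K := K) (G := G) F w)
        = lam.sum fun w' t => if w' = w then t • Qel (K := K) (G := G) F w' else 0 := by
      refine Finsupp.sum_congr (fun w' _ => ?_)
      rw [smul_mul_assoc, Qel_mul_Qel]
      split_ifs with hh
      · rfl
      · rw [smul_zero]
    rw [heq, Finsupp.sum_ite_eq']
    split_ifs with hh
    · rfl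
    · rw [Finsupp.notMem_support_iff.mp hh, zero_smul]
  have hQc : ∀ w : G.V, Qel (K := K) (G := G) F w * c
      = lam w • Qel (K := K) (G := G) F w := by
    intro w
    rw [hcq, Finsupp.mul_sum]
    have heq : (lam.sum fun w' t => Qel (K := K) (G := G) F w
          * (t • Qel (K := K) (G := G) F w'))
        = lam.sum fun w' t => if w = w' then t • Qel (K := K) (G := G) F w' else 0 := by
      refine Finsupp.sum_congr (fun w' _ => ?_)
      rw [mul_smul_comm, Qel_mul_Qel]
      split_ifs with hh
      · subst hh; rfl
      · rw [smul_zero]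
    rw [heq, Finsupp.sum_ite_eq]
    split_ifs with hh
    · rfl
    · rw [Finsupp.notMem_support_iff.mp hh, zero_smul]
  have hsq : ∀ w : G.V, lam w • Qel (K := K) (G := G) F w = 0 := by
    intro w
    have key : (lam w * lam w) • Qel (K := K) (G := G) F w = 0 := by
      calc (lam w * lam w) • Qel (K := K) (G := G) F w
          = lam w • (lam w • Qel (K := K) (G := G) F w) := mul_smul _ _ _
        _ = lam w • (Qel (K := K) (G := G) F w * c) := by rw [hQc]
        _ = (lam w • Qel (K := K) (G := G) F w) * c := (smul_mul_assoc _ _ _).symm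
        _ = (c * Qel (K := K) (G := G) F w) * c := by rw [hcQ]
        _ = 0 := h _
    by_cases hz : lam w = 0
    · rw [hz, zero_smul]
    · have h3 : ((lam w * lam w)⁻¹ * (lam w * lam w)) • Qel (K := K) (G := G) F w = 0 := by
        rw [mul_smul, key, smul_zero]
      rw [inv_mul_cancel₀ (mul_ne_zero hz hz), one_smul] at h3
      rw [h3, smul_zero]
  rw [hcq, Finsupp.sum]
  exact Finset.sum_eq_zero (fun w _ => hsq w)

lemma S0span : ∀ (n : ℕ) (c : LPA K G), c ∈ Submodule.span K (SV (K := K) (G := G) n) →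
    (∀ r : LPA K G, c * r * c = 0) → c = 0 := by
  intro n
  induction n with
  | zero =>
    intro c hc h
    obtain ⟨lam, hlam⟩ := DEC0 hc
    refine S0end lam ∅ c ?_ h
    rw [Finset.sum_empty, sub_zero]
    exact hlam
  | succ n ih =>
    intro c hc h
    have hred : ∀ e f : G.E, (ghost K G e * c) * edge K G f = 0 := fun e f =>
      ih _ (RED hc e f) (sandwich0 h (ghost K G e) (edge K G f))
    obtain ⟨lam, F, hdec⟩ := DEC hc
    have h2 := hdec F (subset_refl F)
    have hmid : (∑ e ∈ F, ∑ f ∈ F,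
        (edge K G e * ((ghost K G e * c) * edge K G f)) * ghost K G f) = 0 := by
      refine Finset.sum_eq_zero (fun e _ => Finset.sum_eq_zero (fun f _ => ?_))
      rw [hred e f, mul_zero, zero_mul]
    rw [hmid, add_zero] at h2
    exact S0end lam F c h2 h

/-- Degree-zero graded semiprimeness. -/
lemma GS0 {c : LPA K G} (hc : c ∈ grade K G 0) (h : ∀ r : LPA K G, c * r * c = 0) :
    c = 0 := by
  obtain ⟨n, hn⟩ := grade0_mem_SVspan hc
  exact S0span n c hn h


-- ## Chunk 4d: graded semiprimeness in all degrees

lemma edge_mem_grade (e : G.E) : edge K G e ∈ grade K G 1 := by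
  have h := monomial_mem_grade (K := K) (Path.cons e (Path.nil (G.rng e)))
    (Path.nil (G.rng e)) (n := 1) (by simp)
  rwa [pathElemStar_nil, pathElem_cons, pathElem_nil, mul_assoc, vert_mul_vert,
    if_pos rfl, edge_mul_vert, if_pos rfl] at h

lemma ghost_mem_grade (e : G.E) : ghost K G e ∈ grade K G (-1) := by
  have h := monomial_mem_grade (K := K) (Path.nil (G.rng e))
    (Path.cons e (Path.nil (G.rng e))) (n := -1) (by simp)
  rwa [pathElem_nil, pathElemStar_cons, pathElemStar_nil, ← mul_assoc, vert_mul_vert,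
    if_pos rfl, vert_mul_ghost, if_pos rfl] at h

lemma DECP {d : ℤ} (hd : 1 ≤ d) {c : LPA K G} (hc : c ∈ grade K G d) :
    ∃ F : Finset G.E, ∀ F' : Finset G.E, F ⊆ F' →
      c = ∑ e ∈ F', edge K G e * (ghost K G e * c) := by
  rw [grade_def] at hc
  refine Submodule.span_induction ?_ ?_ ?_ ?_ hc
  · rintro m ⟨u, u', w, α, β, hdeg, rfl⟩
    have hl : α.length ≠ 0 := by omega
    obtain ⟨e₀, α', hsrc, hlen', hPE, _⟩ := exists_head (K := K) α hl
    rw [hPE]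
    refine ⟨{e₀}, fun F' hF => ?_⟩
    have he₀ : e₀ ∈ F' := hF (by simp)
    have hterm : ∀ e : G.E, edge K G e * (ghost K G e
          * ((edge K G e₀ * pathElem K G α') * pathElemStar K G β))
        = if e = e₀ then (edge K G e₀ * pathElem K G α') * pathElemStar K G β else 0 := by
      intro e
      rw [show ghost K G e * ((edge K G e₀ * pathElem K G α') * pathElemStar K G β)
          = ((ghost K G e * edge K G e₀) * pathElem K G α') * pathElemStar K G β from by
          simp only [mul_assoc], ghost_mul_edge]
      by_cases h : e = e₀
      · rw [if_pos h, if_pos h]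
        subst h
        rw [vert_mul_pathElem, if_pos rfl]
        simp only [mul_assoc]
      · rw [if_neg h, if_neg h]
        simp only [zero_mul, mul_zero]
    rw [Finset.sum_congr rfl (fun e _ => hterm e), Finset.sum_ite_eq' F' e₀ _, if_pos he₀]
  · refine ⟨∅, fun F' _ => ?_⟩
    refine (Finset.sum_eq_zero (fun e _ => ?_)).symm
    rw [mul_zero, mul_zero]
  · rintro a b _ _ ⟨Fa, hda⟩ ⟨Fb, hdb⟩
    refine ⟨Fa ∪ Fb, fun F' hF => ?_⟩
    have hsum : (∑ e ∈ F', edge K G e * (ghost K G e * (a + b)))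
        = (∑ e ∈ F', edge K G e * (ghost K G e * a))
          + ∑ e ∈ F', edge K G e * (ghost K G e * b) := by
      rw [← Finset.sum_add_distrib]
      exact Finset.sum_congr rfl (fun e _ => by rw [mul_add, mul_add])
    rw [hsum]
    conv_lhs => rw [hda F' (Finset.union_subset_iff.mp hF).1,
      hdb F' (Finset.union_subset_iff.mp hF).2]
  · rintro t a _ ⟨Fa, hda⟩
    refine ⟨Fa, fun F' hF => ?_⟩
    have hsum : (∑ e ∈ F', edge K G e * (ghost K G e * (t • a)))
        = t • ∑ e ∈ F', edge K G e * (ghost K G e * a) := by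
      rw [Finset.smul_sum]
      exact Finset.sum_congr rfl (fun e _ => by rw [mul_smul_comm, mul_smul_comm])
    rw [hsum]
    conv_lhs => rw [hda F' hF]

lemma DECN {d : ℤ} (hd : d ≤ -1) {c : LPA K G} (hc : c ∈ grade K G d) :
    ∃ F : Finset G.E, ∀ F' : Finset G.E, F ⊆ F' →
      c = ∑ f ∈ F', (c * edge K G f) * ghost K G f := by
  rw [grade_def] at hc
  refine Submodule.span_induction ?_ ?_ ?_ ?_ hc
  · rintro m ⟨u, u', w, α, β, hdeg, rfl⟩
    have hl : β.length ≠ 0 := by omega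
    obtain ⟨f₀, β', hsrc, hlen', _, hSE⟩ := exists_head (K := K) β hl
    rw [hSE]
    refine ⟨{f₀}, fun F' hF => ?_⟩
    have hf₀ : f₀ ∈ F' := hF (by simp)
    have hterm : ∀ f : G.E,
        ((pathElem K G α * (pathElemStar K G β' * ghost K G f₀)) * edge K G f) * ghost K G f
          = if f₀ = f then pathElem K G α * (pathElemStar K G β' * ghost K G f₀) else 0 := by
      intro f
      rw [show (pathElem K G α * (pathElemStar K G β' * ghost K G f₀)) * edge K G f
          = pathElem K G α * (pathElemStar K G β' * (ghost K G f₀ * edge K G f)) from by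
          simp only [mul_assoc], ghost_mul_edge]
      by_cases h : f₀ = f
      · rw [if_pos h, if_pos h]
        subst h
        rw [pathElemStar_mul_vert, if_pos rfl]
        simp only [mul_assoc]
      · rw [if_neg h, if_neg h]
        simp only [zero_mul, mul_zero]
    rw [Finset.sum_congr rfl (fun f _ => hterm f), Finset.sum_ite_eq F' f₀ _, if_pos hf₀]
  · refine ⟨∅, fun F' _ => ?_⟩
    refine (Finset.sum_eq_zero (fun e _ => ?_)).symm
    rw [zero_mul, zero_mul]
  · rintro a b _ _ ⟨Fa, hda⟩ ⟨Fb, hdb⟩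
    refine ⟨Fa ∪ Fb, fun F' hF => ?_⟩
    have hsum : (∑ f ∈ F', ((a + b) * edge K G f) * ghost K G f)
        = (∑ f ∈ F', (a * edge K G f) * ghost K G f)
          + ∑ f ∈ F', (b * edge K G f) * ghost K G f := by
      rw [← Finset.sum_add_distrib]
      exact Finset.sum_congr rfl (fun f _ => by rw [add_mul, add_mul])
    rw [hsum]
    conv_lhs => rw [hda F' (Finset.union_subset_iff.mp hF).1,
      hdb F' (Finset.union_subset_iff.mp hF).2]
  · rintro t a _ ⟨Fa, hda⟩
    refine ⟨Fa, fun F' hF => ?_⟩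
    have hsum : (∑ f ∈ F', ((t • a) * edge K G f) * ghost K G f)
        = t • ∑ f ∈ F', (a * edge K G f) * ghost K G f := by
      rw [Finset.smul_sum]
      exact Finset.sum_congr rfl (fun f _ => by rw [smul_mul_assoc, smul_mul_assoc])
    rw [hsum]
    conv_lhs => rw [hda F' hF]

/-- Graded semiprimeness of the Leavitt path algebra. -/
lemma GS : ∀ (N : ℕ) (d : ℤ), d.natAbs ≤ N → ∀ c : LPA K G, c ∈ grade K G d →
    (∀ r : LPA K G, c * r * c = 0) → c = 0 := by
  intro N
  induction N with
  | zero =>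
    intro d hd c hc h
    have hd0 : d = 0 := by omega
    subst hd0
    exact GS0 hc h
  | succ N ih =>
    intro d hd c hc h
    rcases lt_trichotomy d 0 with hneg | hzero | hpos
    · obtain ⟨F, hF⟩ := DECN (by omega) hc
      have hcf : ∀ f : G.E, c * edge K G f = 0 := by
        intro f
        refine ih (d + 1) (by omega) _ ?_ (sandwichR h (edge K G f))
        exact grade_mul_grade hc (edge_mem_grade f)
      rw [hF F (subset_refl F)]
      exact Finset.sum_eq_zero (fun f _ => by rw [hcf f, zero_mul])
    · subst hzero
      exact GS0 hc h
    · obtain ⟨F, hF⟩ := DECP (by omega) hc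
      have hgc : ∀ e : G.E, ghost K G e * c = 0 := by
        intro e
        refine ih (-1 + d) (by omega) _ ?_ (sandwichL h (ghost K G e))
        exact grade_mul_grade (ghost_mem_grade e) hc
      rw [hF F (subset_refl F)]
      exact Finset.sum_eq_zero (fun e _ => by rw [hgc e, mul_zero])

/-- Graded semiprimeness, user-facing form. -/
lemma graded_semiprime {d : ℤ} {c : LPA K G} (hc : c ∈ grade K G d)
    (h : ∀ r : LPA K G, c * r * c = 0) : c = 0 :=
  GS d.natAbs d le_rfl c hc h


-- ## Chunk 5: the main theorem

lemma hom_mid_ext {y z : LPA K G}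
    (h : ∀ (d : ℤ) (ρ : LPA K G), ρ ∈ gradep (K := K) (G := G) d → y * (ρ * z) = 0)
    (r : LPA K G) : y * (r * z) = 0 := by
  have hr : r = (Theta K G r).coeff.sum (fun _ v => v) := by rw [← eps_apply, eps_Theta]
  rw [hr, Finsupp.sum_mul, Finsupp.mul_sum, Finsupp.sum]
  exact Finset.sum_eq_zero (fun d _ => h d _ (Theta_apply_mem_gradep r d))

lemma perp_graded_main (I : TwoSidedIdeal (LPA K G)) (f : ℤ →₀ LPA K G)
    (hf : ∀ n : ℤ, f n ∈ grade K G n)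
    (ha : ∀ y, y ∈ I → (f.sum fun _ x => x) * y = 0 ∧ y * (f.sum fun _ x => x) = 0)
    (n : ℤ) (x : LPA K G) (hx : x ∈ I) : f n * x = 0 ∧ x * f n = 0 := by
  classical
  set a := f.sum fun _ x => x with hadef
  by_cases hf0 : f = 0
  · rw [hf0]
    simp
  by_cases hx0 : Theta K G x = 0
  · have hxz : x = 0 := by rw [← eps_Theta (K := K) (G := G) x, hx0, map_zero]
    rw [hxz]
    simp
  have hΘa : Theta K G a = f.sum (fun k ak => AddMonoidAlgebra.single k ak) := by
    rw [hadef, map_finsuppSum]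
    exact Finsupp.sum_congr (fun k _ => Theta_grade (hf k))
  set X : ℤ → LPA K G := fun j => (Theta K G x).coeff j with hXdef
  set M : ℤ := f.support.max' (Finsupp.support_nonempty_iff.mpr hf0) with hMdef
  set N : ℤ := (Theta K G x).coeff.support.max' (Finsupp.support_nonempty_iff.mpr (fun h => hx0 (by
    rw [← AddMonoidAlgebra.ofCoeff_coeff (Theta K G x), h]; rfl))) with hNdef
  have hMle : ∀ k : ℤ, M < k → f k = 0 := by
    intro k hk
    by_contra h0
    exact absurd (Finset.le_max' _ k (Finsupp.mem_support_iff.mpr h0)) (by omega)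
  have hNle : ∀ j : ℤ, N < j → X j = 0 := by
    intro j hj
    by_contra h0
    exact absurd (Finset.le_max' _ j (Finsupp.mem_support_iff.mpr h0)) (by omega)
  have REL : ∀ (d : ℤ) (ρ : LPA K G), ρ ∈ gradep (K := K) (G := G) d → ∀ q : ℤ,
      (f.sum fun k ak => ak * (ρ * X (-d + (-k + q)))) = 0 := by
    intro d ρ hρ q
    have h0 : a * (ρ * x) = 0 := (ha _ (I.mul_mem_left ρ x hx)).1
    have h1 : Theta K G a * (AddMonoidAlgebra.single d ρ * Theta K G x) = 0 := by
      rw [← Theta_gradep hρ, ← map_mul, ← map_mul, h0, map_zero]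
    have h2 : (Theta K G a * (AddMonoidAlgebra.single d ρ * Theta K G x)).coeff q = 0 := by
      rw [h1]
      rfl
    rw [hΘa, Finsupp.sum_mul, AddMonoidAlgebra.coeff_finsuppSum, Finsupp.sum_apply] at h2
    rw [← h2]
    refine Finsupp.sum_congr (fun k _ => ?_)
    rw [AddMonoidAlgebra.coeff_single_mul_apply, AddMonoidAlgebra.coeff_single_mul_apply]
  have KEY : ∀ (s : ℕ) (k j : ℤ), (M - k) + (N - j) ≤ (s : ℤ) - 1 →
      ∀ (d : ℤ) (ρ : LPA K G), ρ ∈ gradep (K := K) (G := G) d →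
        f k * (ρ * X j) = 0 ∧ X j * (ρ * f k) = 0 := by
    intro s
    induction s with
    | zero =>
      intro k j hlev d ρ hρ
      rcases (by omega : M < k ∨ N < j) with h | h
      · rw [hMle k h]
        exact ⟨zero_mul _, by rw [mul_zero, mul_zero]⟩
      · rw [hNle j h]
        exact ⟨by rw [mul_zero, mul_zero], zero_mul _⟩
    | succ s IH =>
      intro k j hlev d ρ hρ
      have IHX : ∀ k j : ℤ, (M - k) + (N - j) ≤ (s:ℤ) - 1 → ∀ r : LPA K G,
          X j * (r * f k) = 0 :=
        fun k j h r => hom_mid_ext (fun d ρ hρ => (IH k j h d ρ hρ).2) r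
      have stageA : ∀ t : ℕ, ∀ (d : ℤ) (ρ : LPA K G), ρ ∈ gradep (K := K) (G := G) d →
          f (M - t) * (ρ * X (N - s + t)) = 0 := by
        intro t
        induction t using Nat.strong_induction_on with
        | _ t IHt =>
        intro d ρ hρ
        by_cases hksupp : (M - (t:ℤ)) ∈ f.support
        swap
        · rw [Finsupp.notMem_support_iff.mp hksupp, zero_mul]
        · have hrel' : (f.sum fun k ak => ak * (ρ * X (M + N - (s:ℤ) - k))) = 0 := by
            have hq := REL d ρ hρ (d + (M + N - (s:ℤ)))
            rw [← hq]
            exact Finsupp.sum_congr (fun k _ => by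
              rw [show M + N - (s:ℤ) - k = -d + (-k + (d + (M + N - (s:ℤ)))) from by ring])
          rw [Finsupp.sum, ← Finset.add_sum_erase _ _ hksupp] at hrel'
          have hc : f (M - (t:ℤ)) * (ρ * X (M + N - (s:ℤ) - (M - (t:ℤ))))
              = -∑ k ∈ f.support.erase (M - (t:ℤ)), f k * (ρ * X (M + N - (s:ℤ) - k)) :=
            eq_neg_of_add_eq_zero_left hrel'
          have hidx : M + N - (s:ℤ) - (M - (t:ℤ)) = N - (s:ℤ) + t := by ring
          rw [hidx] at hc
          refine graded_semiprime (grade_mul_gradep (hf _)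
            (gradep_mul_gradep hρ (Theta_apply_mem_gradep x _))) ?_
          intro r
          nth_rewrite 1 [hc]
          rw [neg_mul, neg_mul, neg_eq_zero, Finset.sum_mul, Finset.sum_mul]
          refine Finset.sum_eq_zero (fun k hk => ?_)
          have hkM : k ≤ M := Finset.le_max' _ k (Finset.mem_of_mem_erase hk)
          have hkne : k ≠ M - (t:ℤ) := Finset.ne_of_mem_erase hk
          rcases lt_or_gt_of_ne hkne with hlt | hgt
          · have hmid : X (M + N - (s:ℤ) - k) * (r * f (M - (t:ℤ))) = 0 :=
              IHX (M - (t:ℤ)) (M + N - (s:ℤ) - k) (by omega) r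
            calc f k * (ρ * X (M + N - (s:ℤ) - k)) * r
                  * (f (M - (t:ℤ)) * (ρ * X (N - (s:ℤ) + t)))
                = f k * (ρ * ((X (M + N - (s:ℤ) - k) * (r * f (M - (t:ℤ))))
                    * (ρ * X (N - (s:ℤ) + t)))) := by
                  simp only [mul_assoc]
              _ = 0 := by rw [hmid, zero_mul, mul_zero, mul_zero]
          · set u : ℕ := (M - k).toNat with hudef
            have hu : (u : ℤ) = M - k := Int.toNat_of_nonneg (by omega)
            have hz := IHt u (by omega) d ρ hρ
            rw [show M - (u:ℤ) = k from by omega,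
              show N - (s:ℤ) + (u:ℤ) = M + N - (s:ℤ) - k from by omega] at hz
            rw [hz, zero_mul, zero_mul]
      have stageA' : ∀ t : ℕ, ∀ r : LPA K G, f (M - t) * (r * X (N - s + t)) = 0 :=
        fun t r => hom_mid_ext (fun d ρ hρ => stageA t d ρ hρ) r
      have stageB : ∀ t : ℕ, ∀ (d : ℤ) (ρ : LPA K G), ρ ∈ gradep (K := K) (G := G) d →
          X (N - s + t) * (ρ * f (M - t)) = 0 := by
        intro t d ρ hρ
        refine graded_semiprime (gradep_mul_grade (Theta_apply_mem_gradep x _)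
          (gradep_mul_grade hρ (hf _))) ?_
        intro r
        calc X (N - (s:ℤ) + t) * (ρ * f (M - (t:ℤ))) * r
              * (X (N - (s:ℤ) + t) * (ρ * f (M - (t:ℤ))))
            = X (N - (s:ℤ) + t) * (ρ * ((f (M - (t:ℤ)) * (r * X (N - (s:ℤ) + t)))
                * (ρ * f (M - (t:ℤ))))) := by
              simp only [mul_assoc]
          _ = 0 := by rw [stageA' t r, zero_mul, mul_zero, mul_zero]
      by_cases hks : (M - k) + (N - j) ≤ (s:ℤ) - 1
      · exact IH k j hks d ρ hρ
      · rcases (by omega : M < k ∨ N < j ∨ ((0:ℤ) ≤ M - k ∧ (M - k) + (N - j) = s))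
          with h | h | ⟨hpos, hexact⟩
        · rw [hMle k h]
          exact ⟨zero_mul _, by rw [mul_zero, mul_zero]⟩
        · rw [hNle j h]
          exact ⟨by rw [mul_zero, mul_zero], zero_mul _⟩
        · have ht : ((M - k).toNat : ℤ) = M - k := Int.toNat_of_nonneg hpos
          constructor
          · have hA := stageA (M - k).toNat d ρ hρ
            rwa [show M - ((M - k).toNat : ℤ) = k from by omega,
              show N - (s:ℤ) + ((M - k).toNat : ℤ) = j from by omega] at hA
          · have hB := stageB (M - k).toNat d ρ hρ
            rwa [show M - ((M - k).toNat : ℤ) = k from by omega,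
              show N - (s:ℤ) + ((M - k).toNat : ℤ) = j from by omega] at hB
  have KEY' : ∀ (k j : ℤ) (r : LPA K G), f k * (r * X j) = 0 ∧ X j * (r * f k) = 0 := by
    intro k j r
    have hlev := KEY (((M - k) + (N - j)).toNat + 1) k j (by omega)
    exact ⟨hom_mid_ext (fun d ρ hρ => (hlev d ρ hρ).1) r,
      hom_mid_ext (fun d ρ hρ => (hlev d ρ hρ).2) r⟩
  have hxsum : x = (Theta K G x).coeff.sum (fun _ v => v) := by rw [← eps_apply, eps_Theta]
  constructor
  · rw [hxsum, Finsupp.mul_sum, Finsupp.sum]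
    refine Finset.sum_eq_zero (fun j _ => ?_)
    have := (KEY' n j 1).1
    rwa [one_mul] at this
  · rw [hxsum, Finsupp.sum_mul, Finsupp.sum]
    refine Finset.sum_eq_zero (fun j _ => ?_)
    have := (KEY' n j 1).2
    rwa [one_mul] at this

end DGraph

open DGraph in
/-- For an arbitrary graph `E` and any ideal `I` of `L_K(E)`, the annihilator `I^⊥`
is a ℤ-graded ideal of `L_K(E)`. -/
theorem perp_isGraded (K : Type) [Field K] (G : DGraph) (I : TwoSidedIdeal (LPA K G)) :
    ∃ P : TwoSidedIdeal (LPA K G), (P : Set (LPA K G)) = perpSet (I : Set (LPA K G)) ∧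
      IsGradedIdeal K G P := by
  classical
  have hzero : (0 : LPA K G) ∈ perpSet (I : Set (LPA K G)) := by
    intro z hz
    exact ⟨zero_mul z, mul_zero z⟩
  have hadd : ∀ {a b : LPA K G}, a ∈ perpSet (I : Set (LPA K G)) →
      b ∈ perpSet (I : Set (LPA K G)) → a + b ∈ perpSet (I : Set (LPA K G)) := by
    intro a b ha hb z hz
    exact ⟨by rw [add_mul, (ha z hz).1, (hb z hz).1, add_zero],
      by rw [mul_add, (ha z hz).2, (hb z hz).2, add_zero]⟩
  have hneg : ∀ {a : LPA K G}, a ∈ perpSet (I : Set (LPA K G)) →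
      -a ∈ perpSet (I : Set (LPA K G)) := by
    intro a ha z hz
    exact ⟨by rw [neg_mul, (ha z hz).1, neg_zero],
      by rw [mul_neg, (ha z hz).2, neg_zero]⟩
  have hml : ∀ {a b : LPA K G}, b ∈ perpSet (I : Set (LPA K G)) →
      a * b ∈ perpSet (I : Set (LPA K G)) := by
    intro a b hb z hz
    refine ⟨by rw [mul_assoc, (hb z hz).1, mul_zero], ?_⟩
    have hza : z * a ∈ I := I.mul_mem_right z a hz
    rw [← mul_assoc]
    exact (hb (z * a) hza).2
  have hmr : ∀ {a b : LPA K G}, a ∈ perpSet (I : Set (LPA K G)) →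
      a * b ∈ perpSet (I : Set (LPA K G)) := by
    intro a b ha z hz
    have hbz : b * z ∈ I := I.mul_mem_left b z hz
    refine ⟨by rw [mul_assoc]; exact (ha (b * z) hbz).1, ?_⟩
    rw [← mul_assoc, (ha z hz).2, zero_mul]
  refine ⟨TwoSidedIdeal.mk' (perpSet (I : Set (LPA K G))) hzero hadd hneg hml hmr, ?_, ?_⟩
  · ext z
    exact TwoSidedIdeal.mem_mk' _ _ _ _ _ _ z
  · intro f hf hsum n
    rw [TwoSidedIdeal.mem_mk'] at hsum ⊢
    intro x hx
    exact perp_graded_main I f hf (fun y hy => hsum y hy) n x hx
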